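/- Let E, F be Banach spaces, m ≥ 1, and let P : E → F be an m-homogeneous polynomial satisfying the 1-domination inequality ‖P(x)‖ ≤ C (∫_{B_{E'}} |φ(x)| dμ(φ))^m for a probability measure μ on B_{E'}. Let ψ ∈ E' with ‖ψ‖ ≤ 1. Then the (m+1)-homogeneous polynomial Q(x) = ψ(x)·P(x) satisfies ‖Q(x)‖ ≤ C' (∫_{B_{E'}} |φ(x)| dν(φ))^{m+1} for some probability measure ν on B_{E'} and some constant C'; specifically one may take ν = (m μ + δ_ψ)/(m+1) and C' = C (m+1)^{m+1}/m^m. -/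

import Mathlib

open MeasureTheory
open scoped ENNReal

lemma my_integrable_dirac {α : Type*} [MeasurableSpace α] [MeasurableSingletonClass α]
    (f : α → ℝ) (a : α) : Integrable f (Measure.dirac a) := by
  constructor
  · refine ⟨fun _ => f a, stronglyMeasurable_const, ?_⟩
    refine measure_mono_null (fun x hx => ?_) (by simp : Measure.dirac a {a}ᶜ = 0)
    simp only [Set.mem_compl_iff, Set.mem_singleton_iff]
    intro h; subst h; exact hx rfl
  · rw [HasFiniteIntegral, MeasureTheory.lintegral_dirac]
    exact ENNReal.coe_lt_top

/-- if the `m`-homogeneous polynomial `P` (`m ≥ 1`) satisfies the 1-domination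
`‖P(x)‖ ≤ C (∫_{B_{E'}} |φ(x)| dμ)^m` and `ψ ∈ B_{E'}`, then `Q(x) = ψ(x)·P(x)` satisfies a
1-domination of degree `m+1` with `ν = (mμ + δ_ψ)/(m+1)` and `C' = C(m+1)^{m+1}/m^m`. -/
theorem stmt12
    {E F : Type} [NormedAddCommGroup E] [NormedSpace ℝ E] [CompleteSpace E]
    [NormedAddCommGroup F] [NormedSpace ℝ F] [CompleteSpace F]
    (m : ℕ) (hm : 1 ≤ m)
    (P : E → F) (T : ContinuousMultilinearMap ℝ (fun _ : Fin m => E) F)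
    (hPpoly : ∀ x : E, P x = T (fun _ => x))
    (C : ℝ) (hC : 0 ≤ C)
    [MeasurableSpace {φ : E →L[ℝ] ℝ // ‖φ‖ ≤ 1}]
    [MeasurableSingletonClass {φ : E →L[ℝ] ℝ // ‖φ‖ ≤ 1}]
    (μ : Measure {φ : E →L[ℝ] ℝ // ‖φ‖ ≤ 1}) [IsProbabilityMeasure μ]
    (hP : ∀ x : E, ‖P x‖ ≤ C * (∫ φ, |(φ.1 : E →L[ℝ] ℝ) x| ∂μ) ^ m)
    (ψ : E →L[ℝ] ℝ) (hψ : ‖ψ‖ ≤ 1) :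
    IsProbabilityMeasure
      (((m : ℝ≥0∞) / (m + 1)) • μ +
        ((1 : ℝ≥0∞) / (m + 1)) • Measure.dirac (⟨ψ, hψ⟩ : {φ : E →L[ℝ] ℝ // ‖φ‖ ≤ 1})) ∧
    ∀ x : E, ‖ψ x • P x‖ ≤
      (C * (m + 1 : ℝ) ^ (m + 1) / (m : ℝ) ^ m) *
        (∫ φ, |(φ.1 : E →L[ℝ] ℝ) x|
          ∂(((m : ℝ≥0∞) / (m + 1)) • μ +
            ((1 : ℝ≥0∞) / (m + 1)) •
              Measure.dirac (⟨ψ, hψ⟩ : {φ : E →L[ℝ] ℝ // ‖φ‖ ≤ 1}))) ^ (m + 1) := by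
  have hm1 : ((m : ℝ≥0∞) + 1) ≠ 0 := by
    simp
  have hm1' : ((m : ℝ≥0∞) + 1) ≠ ⊤ := by simp
  have hmR : (0 : ℝ) < m := by exact_mod_cast hm
  set a : {φ : E →L[ℝ] ℝ // ‖φ‖ ≤ 1} := ⟨ψ, hψ⟩
  set ν := ((m : ℝ≥0∞) / (m + 1)) • μ + ((1 : ℝ≥0∞) / (m + 1)) • Measure.dirac a with hν
  have hprob : IsProbabilityMeasure ν := by
    constructor
    simp only [hν, Measure.add_apply, Measure.smul_apply, smul_eq_mul,
      measure_univ, mul_one, Measure.dirac_apply_of_mem (Set.mem_univ a)]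
    rw [ENNReal.div_add_div_same, ENNReal.div_self hm1 hm1']
  refine ⟨hprob, fun x => ?_⟩
  set f : {φ : E →L[ℝ] ℝ // ‖φ‖ ≤ 1} → ℝ := fun φ => |(φ.1 : E →L[ℝ] ℝ) x| with hf
  have hfnn : ∀ φ, 0 ≤ f φ := fun φ => abs_nonneg _
  have hInu : (0:ℝ) ≤ ∫ φ, f φ ∂ν := integral_nonneg hfnn
  have hCnn : (0:ℝ) ≤ C * (m + 1 : ℝ) ^ (m + 1) / (m : ℝ) ^ m := by positivity
  by_cases hint : Integrable f μ
  · -- compute ∫ f dν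
    have h1 : Integrable f (((m : ℝ≥0∞) / (m + 1)) • μ) :=
      hint.smul_measure (by simp [ENNReal.div_eq_top])
    have h2 : Integrable f (((1 : ℝ≥0∞) / (m + 1)) • Measure.dirac a) :=
      (my_integrable_dirac f a).smul_measure (by simp [ENNReal.div_eq_top])
    have hIμ : (0:ℝ) ≤ ∫ φ, f φ ∂μ := integral_nonneg hfnn
    set A := ∫ φ, f φ ∂μ
    have hcalc : ∫ φ, f φ ∂ν =
        ((m:ℝ)/(m+1)) * A + (1/(m+1)) * |ψ x| := by
      rw [hν, integral_add_measure h1 h2, integral_smul_measure, integral_smul_measure,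
        integral_dirac]
      have t0 : ((m : ℝ≥0∞) + 1).toReal = (m:ℝ) + 1 := by
        rw [ENNReal.toReal_add (by simp) (by simp)]; simp
      have t1 : ((m : ℝ≥0∞) / (m + 1)).toReal = (m:ℝ)/(m+1) := by
        rw [ENNReal.toReal_div, t0]; simp
      have t2 : ((1 : ℝ≥0∞) / (m + 1)).toReal = (1:ℝ)/(m+1) := by
        rw [ENNReal.toReal_div, t0]; simp
      rw [t1, t2]; simp [f, a]; exact Or.inl rfl
    rw [hcalc]
    have hBnn : (0:ℝ) ≤ |ψ x| := abs_nonneg _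
    have key : |ψ x| * (C * A ^ m) ≤
        (C * (m + 1 : ℝ) ^ (m + 1) / (m : ℝ) ^ m) *
          (((m:ℝ)/(m+1)) * A + (1/(m+1)) * |ψ x|) ^ (m + 1) := by
      set B := |ψ x|
      have hsum : ((m:ℝ)/(m+1)) * A + (1/(m+1)) * B = ((m:ℝ)*A + B)/(m+1) := by
        field_simp
      have h4 : ((m:ℝ)*A) ^ m ≤ ((m:ℝ)*A + B) ^ m :=
        pow_le_pow_left₀ (by positivity) (le_add_of_nonneg_right hBnn) m
      have h5 : B ≤ (m:ℝ)*A + B := le_add_of_nonneg_left (by positivity)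
      have hmain : (m:ℝ)^m * (B * A^m) ≤ ((m:ℝ)*A + B)^(m+1) := by
        calc (m:ℝ)^m * (B*A^m) = ((m:ℝ)*A)^m * B := by rw [mul_pow]; ring
          _ ≤ ((m:ℝ)*A+B)^m * ((m:ℝ)*A+B) := mul_le_mul h4 h5 hBnn (by positivity)
          _ = _ := (pow_succ _ m).symm
      rw [hsum, div_pow]
      calc B*(C*A^m) = C * ((m:ℝ)^m * (B*A^m)) / (m:ℝ)^m := by
            field_simp
        _ ≤ C * (((m:ℝ)*A+B)^(m+1)) / (m:ℝ)^m := by gcongr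
        _ = C*((m:ℝ)+1)^(m+1)/(m:ℝ)^m * ((((m:ℝ)*A+B))^(m+1)/((m:ℝ)+1)^(m+1)) := by
            field_simp
    calc ‖ψ x • P x‖ = |ψ x| * ‖P x‖ := by rw [norm_smul, Real.norm_eq_abs]
      _ ≤ |ψ x| * (C * A ^ m) := mul_le_mul_of_nonneg_left (hP x) (abs_nonneg _)
      _ ≤ _ := key
  · -- not integrable: ∫ f dμ = 0, so P x = 0
    have h0 : ∫ φ, f φ ∂μ = 0 := integral_undef hint
    have hPx : ‖P x‖ ≤ 0 := by
      have := hP x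
      rw [h0, zero_pow (by omega : m ≠ 0), mul_zero] at this
      exact this
    have : ψ x • P x = 0 := by
      rw [norm_le_zero_iff.mp hPx, smul_zero]
    rw [this, norm_zero]
    positivity
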